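/- Let c be an acyclic partial edge coloring of G with edge e = ab uncolored. If a color β is a candidate for e (no edge adjacent to e is colored β) and (F_a ∩ F_b) \ {c(a,b)} = S_{ab} ∩ S_{ba} = ∅, then assigning β to e yields an acyclic proper partial edge coloring. -/

import Mathlib

open SimpleGraph

/-- Property A: every induced subgraph `H` satisfies `|E(H)| ≤ 2|V(H)| - 1`. -/
def PropertyA {V : Type*} (G : SimpleGraph V) : Prop :=
  ∀ s : Set V, (G.induce s).edgeSet.ncard ≤ 2 * s.ncard - 1

/-- `H` is a minor of `G`: branch sets are disjoint, connected, and adjacency is represented. -/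
def IsMinor {W V : Type*} (H : SimpleGraph W) (G : SimpleGraph V) : Prop :=
  ∃ f : W → Set V,
    (∀ w, (G.induce (f w)).Connected) ∧
    (∀ w₁ w₂, w₁ ≠ w₂ → Disjoint (f w₁) (f w₂)) ∧
    (∀ w₁ w₂, H.Adj w₁ w₂ → ∃ a ∈ f w₁, ∃ b ∈ f w₂, G.Adj a b)

/-- Planarity via Wagner's theorem: no `K₅` minor and no `K₃,₃` minor. -/
def IsPlanar {V : Type*} (G : SimpleGraph V) : Prop :=
  ¬ IsMinor (completeGraph (Fin 5)) G ∧
  ¬ IsMinor (completeBipartiteGraph (Fin 3) (Fin 3)) G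

/-- A proper edge coloring: distinct edges sharing a vertex get distinct colors. -/
def IsProperEdgeColoring {V β : Type*} (G : SimpleGraph V) (c : Sym2 V → β) : Prop :=
  ∀ e ∈ G.edgeSet, ∀ f ∈ G.edgeSet, e ≠ f → (∃ v, v ∈ e ∧ v ∈ f) → c e ≠ c f

/-- An acyclic edge coloring: proper and no cycle uses only two colors. -/
def IsAcyclicEdgeColoring {V β : Type*} (G : SimpleGraph V) (c : Sym2 V → β) : Prop :=
  IsProperEdgeColoring G c ∧
    ∀ (γ δ : β) (v : V) (p : G.Walk v v), p.IsCycle →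
      ¬ ∀ e ∈ p.edges, c e = γ ∨ c e = δ

/-- `G` admits an acyclic edge coloring with at most `k` colors. -/
def AcyclicallyEdgeColorable {V : Type*} (G : SimpleGraph V) (k : ℕ) : Prop :=
  ∃ c : Sym2 V → Fin k, IsAcyclicEdgeColoring G c

/-- A proper partial edge coloring (uncolored edges get `none`). -/
def IsProperPartialEdgeColoring {V : Type*} (G : SimpleGraph V) (c : Sym2 V → Option ℕ) : Prop :=
  ∀ e ∈ G.edgeSet, ∀ f ∈ G.edgeSet, e ≠ f → (∃ v, v ∈ e ∧ v ∈ f) →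
    ∀ γ : ℕ, c e = some γ → c f ≠ some γ

/-- There is a cycle all of whose edges are colored with one of two colors. -/
def HasBichromaticCycle {V : Type*} (G : SimpleGraph V) (c : Sym2 V → Option ℕ) : Prop :=
  ∃ (γ δ : ℕ) (v : V) (p : G.Walk v v), p.IsCycle ∧
    ∀ e ∈ p.edges, c e = some γ ∨ c e = some δ

/-- A valid (acyclic proper) partial edge coloring. -/
def IsAcyclicPartialEdgeColoring {V : Type*} (G : SimpleGraph V) (c : Sym2 V → Option ℕ) : Prop :=
  IsProperPartialEdgeColoring G c ∧ ¬ HasBichromaticCycle G c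

/-- `F_a`: the set of colors appearing on edges incident to `a`. -/
def colorsAt {V : Type*} (G : SimpleGraph V) (c : Sym2 V → Option ℕ) (a : V) : Set ℕ :=
  {γ | ∃ z, G.Adj a z ∧ c s(a, z) = some γ}

/-- `S_{ab} = F_b \ {c(a,b)}`. -/
def Sset {V : Type*} (G : SimpleGraph V) (c : Sym2 V → Option ℕ) (a b : V) : Set ℕ :=
  colorsAt G c b \ {γ | c s(a, b) = some γ}

/-- A maximal `(γ,δ)`-bichromatic path: a path all of whose edges are colored `γ` or `δ`,
which cannot be extended at either end by a `γ`- or `δ`-colored edge. -/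
def IsMaxBichromaticPath {V : Type*} (G : SimpleGraph V) (c : Sym2 V → Option ℕ)
    (γ δ : ℕ) {x y : V} (p : G.Walk x y) : Prop :=
  p.IsPath ∧ (∀ e ∈ p.edges, c e = some γ ∨ c e = some δ) ∧
    ∀ e ∈ G.edgeSet, (x ∈ e ∨ y ∈ e) → (c e = some γ ∨ c e = some δ) → e ∈ p.edges

/-- A `(γ,δ,ab)`-critical path: a maximal `(γ,δ)`-bichromatic path from `a` to `b`
whose first and last edges are colored `γ`. -/
def IsCriticalPath {V : Type*} (G : SimpleGraph V) (c : Sym2 V → Option ℕ)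
    (γ δ : ℕ) (a b : V) (p : G.Walk a b) : Prop :=
  IsMaxBichromaticPath G c γ δ p ∧
    (∃ e, p.edges.head? = some e ∧ c e = some γ) ∧
    (∃ e, p.edges.getLast? = some e ∧ c e = some γ)


lemma aec_exists_ne_of_even_countP {α : Type*} [DecidableEq α] {l : List α} (hnd : l.Nodup)
    {q : α → Bool} {e : α} (he : e ∈ l) (hq : q e) (hev : Even (l.countP q)) :
    ∃ e' ∈ l, e' ≠ e ∧ q e' := by
  by_contra h
  push_neg at h
  have hsub : ∀ x ∈ l.filter q, x = e := by
    intro x hx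
    rw [List.mem_filter] at hx
    by_contra hne
    simp [h x hx.1 hne] at hx
  have hmemf : e ∈ l.filter q := List.mem_filter.mpr ⟨he, hq⟩
  have hndf : (l.filter q).Nodup := hnd.filter q
  have hfil : l.filter q = [e] := by
    cases hf : l.filter q with
    | nil => rw [hf] at hmemf; simp at hmemf
    | cons a t =>
      rw [hf] at hsub hndf
      have ha : a = e := hsub a (by simp)
      have : t = [] := by
        rw [List.eq_nil_iff_forall_not_mem]
        intro x hx
        have := hsub x (by simp [hx])
        rw [List.nodup_cons] at hndf
        exact hndf.1 (by rwa [ha, ← this])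
      rw [ha, this]
  have h1 : l.countP q = 1 := by rw [List.countP_eq_length_filter, hfil]; rfl
  rw [h1] at hev
  exact (Nat.not_even_iff.mpr rfl) hev

lemma aec_cycle_other_edge {V : Type*} [DecidableEq V] {G : SimpleGraph V} {v : V}
    {p : G.Walk v v} (hcyc : p.IsCycle) {e : Sym2 V} (he : e ∈ p.edges) {x : V} (hx : x ∈ e) :
    ∃ e' ∈ p.edges, e' ≠ e ∧ x ∈ e' := by
  have ht : p.IsTrail := hcyc.isTrail
  have hev : Even (p.edges.countP fun e => x ∈ e) :=
    (ht.even_countP_edges_iff x).mpr (fun h => absurd rfl h)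
  obtain ⟨e', h1, h2, h3⟩ := aec_exists_ne_of_even_countP ht.edges_nodup he (by simpa using hx) hev
  exact ⟨e', h1, h2, by simpa using h3⟩

lemma aec_mem_colorsAt {V : Type*} {G : SimpleGraph V} {c : Sym2 V → Option ℕ} {v : V}
    {e : Sym2 V} (he : e ∈ G.edgeSet) (hv : v ∈ e) {γ : ℕ} (hc : c e = some γ) :
    γ ∈ colorsAt G c v := by
  induction e with
  | _ x y =>
    rw [Sym2.mem_iff] at hv
    rw [SimpleGraph.mem_edgeSet] at he
    rcases hv with rfl | rfl
    · exact ⟨y, he, hc⟩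
    · exact ⟨x, he.symm, by rwa [Sym2.eq_swap]⟩

/-- if `β` is a candidate color for the uncolored edge `ab` and
`S_{ab} ∩ S_{ba} = ∅` (equivalently `(F_a ∩ F_b) \ {c(a,b)} = ∅`), then assigning `β`
to `ab` yields an acyclic proper partial edge coloring. -/
theorem candidate_valid_of_disjoint {V : Type*} [DecidableEq V] (G : SimpleGraph V)
    (c : Sym2 V → Option ℕ) (a b : V) (hab : G.Adj a b)
    (hc : IsAcyclicPartialEdgeColoring G c) (hun : c s(a, b) = none)
    (β : ℕ) (hcand : β ∉ colorsAt G c a ∪ colorsAt G c b)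
    (hdisj : Sset G c a b ∩ Sset G c b a = ∅) :
    IsAcyclicPartialEdgeColoring G (Function.update c s(a, b) (some β)) := by
  have hupd_ne : ∀ {e : Sym2 V}, e ≠ s(a,b) →
      Function.update c s(a,b) (some β) e = c e := fun h => Function.update_of_ne h _ _
  have hupd_same : Function.update c s(a,b) (some β) s(a,b) = some β :=
    Function.update_self _ _ _
  have hβa : β ∉ colorsAt G c a := fun h => hcand (Or.inl h)
  have hβb : β ∉ colorsAt G c b := fun h => hcand (Or.inr h)
  constructor
  · intro e he f hf hef hshare γ hce hcf
    obtain ⟨v, hve, hvf⟩ := hshare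
    by_cases h1 : e = s(a,b)
    · subst h1
      rw [hupd_same] at hce
      have h2 : f ≠ s(a,b) := fun h => hef (by rw [h])
      rw [hupd_ne h2] at hcf
      obtain rfl : β = γ := Option.some_injective _ hce
      rcases Sym2.mem_iff.mp hve with rfl | rfl
      · exact hβa (aec_mem_colorsAt hf hvf hcf)
      · exact hβb (aec_mem_colorsAt hf hvf hcf)
    · by_cases h2 : f = s(a,b)
      · subst h2
        rw [hupd_same] at hcf
        rw [hupd_ne h1] at hce
        obtain rfl : β = γ := Option.some_injective _ hcf
        rcases Sym2.mem_iff.mp hvf with rfl | rfl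
        · exact hβa (aec_mem_colorsAt he hve hce)
        · exact hβb (aec_mem_colorsAt he hve hce)
      · rw [hupd_ne h1] at hce
        rw [hupd_ne h2] at hcf
        exact hc.1 e he f hf hef ⟨v, hve, hvf⟩ γ hce hcf
  · rintro ⟨γ, δ, v, p, hcyc, hcol⟩
    by_cases hin : s(a,b) ∈ p.edges
    · have key : ∀ δ' : ℕ,
          (∀ e ∈ p.edges, Function.update c s(a,b) (some β) e = some β ∨
            Function.update c s(a,b) (some β) e = some δ') → False := by
        intro δ' hcol'
        obtain ⟨e₁, he₁p, he₁ne, ha₁⟩ :=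
          aec_cycle_other_edge hcyc hin (Sym2.mem_mk_left a b)
        obtain ⟨e₂, he₂p, he₂ne, hb₂⟩ :=
          aec_cycle_other_edge hcyc hin (Sym2.mem_mk_right a b)
        have he₁G : e₁ ∈ G.edgeSet := p.edges_subset_edgeSet he₁p
        have he₂G : e₂ ∈ G.edgeSet := p.edges_subset_edgeSet he₂p
        have hc₁ : c e₁ = some δ' := by
          rcases hcol' e₁ he₁p with h | h <;> rw [hupd_ne he₁ne] at h
          · exact absurd (aec_mem_colorsAt he₁G ha₁ h) hβa
          · exact h
        have hc₂ : c e₂ = some δ' := by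
          rcases hcol' e₂ he₂p with h | h <;> rw [hupd_ne he₂ne] at h
          · exact absurd (aec_mem_colorsAt he₂G hb₂ h) hβb
          · exact h
        have hδa : δ' ∈ colorsAt G c a := aec_mem_colorsAt he₁G ha₁ hc₁
        have hδb : δ' ∈ colorsAt G c b := aec_mem_colorsAt he₂G hb₂ hc₂
        have hmem : δ' ∈ Sset G c a b ∩ Sset G c b a := by
          refine ⟨⟨hδb, fun h => ?_⟩, ⟨hδa, fun h => ?_⟩⟩
          · rw [Set.mem_setOf_eq, hun] at h
            cases h
          · rw [Set.mem_setOf_eq, Sym2.eq_swap, hun] at h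
            cases h
        rw [hdisj] at hmem
        exact hmem
      have hβmem := hcol _ hin
      rw [hupd_same] at hβmem
      rcases hβmem with h | h
      · obtain rfl : β = γ := Option.some_injective _ h
        exact key δ hcol
      · obtain rfl : β = δ := Option.some_injective _ h
        exact key γ (fun e he => (hcol e he).symm)
    · exact hc.2 ⟨γ, δ, v, p, hcyc, fun e he => by
        rw [← hupd_ne (fun h => hin (h ▸ he))]
        exact hcol e he⟩
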